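/- Let G = {g_z, g_x, g₁, …, g_k} be a commuting independent set of Pauli operators on n ≥ 2 qubits in ZX(j)-form with leading-Z generator g_z and leading-X generator g_x on qubit j (i.e., g_z acts as Z on qubit j, g_x acts as X on qubit j, and all g_i act as identity on qubit j). For fixed a ∈ {0,1}, define g̃_z = ⟨a| g_z |a⟩ and g̃_i = ⟨a| g_i |a⟩ where the bra-ket contracts qubit j. Then {g̃_z, g̃₁, …, g̃_k} is a commuting independent set of Pauli operators on n-1 qubits. -/

import Mathlib

open scoped Matrix

/-- Pauli X. -/
def pauliX : Matrix (Fin 2) (Fin 2) ℂ := !![0, 1; 1, 0]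
/-- Pauli Y. -/
noncomputable def pauliY : Matrix (Fin 2) (Fin 2) ℂ := !![0, -Complex.I; Complex.I, 0]
/-- Pauli Z. -/
def pauliZ : Matrix (Fin 2) (Fin 2) ℂ := !![1, 0; 0, -1]

/-- An n-qubit Pauli operator on (ℂ²)^{⊗n} indexed by `Fin n → Fin 2`. -/
noncomputable def IsPauli {n : ℕ}
    (A : Matrix (Fin n → Fin 2) (Fin n → Fin 2) ℂ) : Prop :=
  ∃ (ω : ℂ) (P : Fin n → Matrix (Fin 2) (Fin 2) ℂ),
    ω ∈ ({1, -1, Complex.I, -Complex.I} : Set ℂ) ∧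
    (∀ j, P j ∈ ({1, pauliX, pauliY, pauliZ} : Set (Matrix (Fin 2) (Fin 2) ℂ))) ∧
    ∀ v w, A v w = ω * ∏ j, P j (v j) (w j)

/-- A Pauli operator on n+1 qubits, with the distinguished qubit j written as the
first tensor factor: ω Q ⊗ P₁ ⊗ … ⊗ P_n. -/
noncomputable def IsPauliProd {n : ℕ}
    (A : Matrix (Fin 2 × (Fin n → Fin 2)) (Fin 2 × (Fin n → Fin 2)) ℂ) : Prop :=
  ∃ (ω : ℂ) (Q : Matrix (Fin 2) (Fin 2) ℂ) (P : Fin n → Matrix (Fin 2) (Fin 2) ℂ),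
    ω ∈ ({1, -1, Complex.I, -Complex.I} : Set ℂ) ∧
    Q ∈ ({1, pauliX, pauliY, pauliZ} : Set (Matrix (Fin 2) (Fin 2) ℂ)) ∧
    (∀ j, P j ∈ ({1, pauliX, pauliY, pauliZ} : Set (Matrix (Fin 2) (Fin 2) ℂ))) ∧
    ∀ p q, A p q = ω * Q p.1 q.1 * ∏ j, P j (p.2 j) (q.2 j)

section csiAux

lemma csi_pauli_sq (S : Matrix (Fin 2) (Fin 2) ℂ)
    (hS : S ∈ ({1, pauliX, pauliY, pauliZ} : Set (Matrix (Fin 2) (Fin 2) ℂ))) : S * S = 1 := by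
  rcases hS with rfl | rfl | rfl | rfl <;>
    · ext i j
      fin_cases i <;> fin_cases j <;>
        simp [Matrix.mul_apply, Fin.sum_univ_two, pauliX, pauliY, pauliZ, Matrix.one_apply]

lemma csi_phase_ne_zero {ω : ℂ} (hω : ω ∈ ({1, -1, Complex.I, -Complex.I} : Set ℂ)) : ω ≠ 0 := by
  rcases hω with rfl | rfl | rfl | rfl <;> simp [Complex.I_ne_zero]

lemma csi_phase_mul_sign {ω s : ℂ} (hω : ω ∈ ({1, -1, Complex.I, -Complex.I} : Set ℂ))
    (hs : s = 1 ∨ s = -1) : ω * s ∈ ({1, -1, Complex.I, -Complex.I} : Set ℂ) := by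
  rcases hs with rfl | rfl <;> rcases hω with rfl | rfl | rfl | rfl <;>
    simp [Set.mem_insert_iff]

lemma csi_Q_diag {Q : Matrix (Fin 2) (Fin 2) ℂ}
    (hQ : Q ∈ ({1, pauliX, pauliY, pauliZ} : Set (Matrix (Fin 2) (Fin 2) ℂ)))
    (h01 : Q 0 1 = 0) : Q = 1 ∨ Q = pauliZ := by
  rcases hQ with rfl | rfl | rfl | rfl
  · exact Or.inl rfl
  · simp [pauliX] at h01
  · simp [pauliY, Complex.I_ne_zero] at h01
  · exact Or.inr rfl

lemma csi_Q_off {Q : Matrix (Fin 2) (Fin 2) ℂ}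
    (hQ : Q ∈ ({1, pauliX, pauliY, pauliZ} : Set (Matrix (Fin 2) (Fin 2) ℂ)))
    (h00 : Q 0 0 = 0) : Q = pauliX ∨ Q = pauliY := by
  rcases hQ with rfl | rfl | rfl | rfl
  · simp [Matrix.one_apply] at h00
  · exact Or.inl rfl
  · exact Or.inr rfl
  · simp [pauliZ] at h00

lemma csi_tmul {n : ℕ} (A B : Matrix (Fin 2 × (Fin n → Fin 2)) (Fin 2 × (Fin n → Fin 2)) ℂ)
    (f₁ f₂ : Matrix (Fin 2) (Fin 2) ℂ) (F₁ F₂ : Matrix (Fin n → Fin 2) (Fin n → Fin 2) ℂ)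
    (hA : ∀ b c v w, A (b, v) (c, w) = f₁ b c * F₁ v w)
    (hB : ∀ b c v w, B (b, v) (c, w) = f₂ b c * F₂ v w) :
    ∀ b c v w, (A * B) (b, v) (c, w) = (f₁ * f₂) b c * (F₁ * F₂) v w := by
  intro b c v w
  rw [Matrix.mul_apply, Fintype.sum_prod_type, Matrix.mul_apply, Matrix.mul_apply,
    Finset.sum_mul_sum]
  refine Finset.sum_congr rfl fun d _ => Finset.sum_congr rfl fun u _ => ?_
  rw [hA, hB]; ring

lemma csi_T_sq {n : ℕ} (P : Fin n → Matrix (Fin 2) (Fin 2) ℂ) (hP : ∀ j, P j * P j = 1) :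
    (Matrix.of fun v w : Fin n → Fin 2 => ∏ j, P j (v j) (w j)) *
      (Matrix.of fun v w : Fin n → Fin 2 => ∏ j, P j (v j) (w j)) = 1 := by
  ext v w
  rw [Matrix.mul_apply]
  simp only [Matrix.of_apply]
  have key : ∀ u : Fin n → Fin 2, (∏ j, P j (v j) (u j)) * ∏ j, P j (u j) (w j)
      = ∏ j, P j (v j) (u j) * P j (u j) (w j) := fun u => (Finset.prod_mul_distrib).symm
  rw [Finset.sum_congr rfl fun u _ => key u,
    ← Fintype.prod_sum fun j c => P j (v j) c * P j c (w j)]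
  have key2 : ∀ j, (∑ c, P j (v j) c * P j c (w j)) = (1 : Matrix (Fin 2) (Fin 2) ℂ) (v j) (w j) := by
    intro j; rw [← Matrix.mul_apply, hP j]
  rw [Finset.prod_congr rfl fun j _ => key2 j]
  by_cases hvw : v = w
  · subst hvw; simp [Matrix.one_apply]
  · obtain ⟨j, hj⟩ := Function.ne_iff.mp hvw
    rw [Matrix.one_apply_ne hvw]
    exact Finset.prod_eq_zero (Finset.mem_univ j) (Matrix.one_apply_ne hj)

/-- Embedding `B ↦ I ⊗ B` as a monoid hom. -/
noncomputable def csiIota (n : ℕ) :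
    Matrix (Fin n → Fin 2) (Fin n → Fin 2) ℂ →*
      Matrix (Fin 2 × (Fin n → Fin 2)) (Fin 2 × (Fin n → Fin 2)) ℂ where
  toFun B := Matrix.of fun p q => (1 : Matrix (Fin 2) (Fin 2) ℂ) p.1 q.1 * B p.2 q.2
  map_one' := by
    ext ⟨b, v⟩ ⟨c, w⟩
    simp only [Matrix.of_apply, Matrix.one_apply, Prod.mk.injEq]
    by_cases h1 : b = c <;> by_cases h2 : v = w <;> simp [h1, h2, Prod.ext_iff]
  map_mul' B C := by
    ext ⟨b, v⟩ ⟨c, w⟩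
    have h := csi_tmul
      (Matrix.of fun p q => (1 : Matrix (Fin 2) (Fin 2) ℂ) p.1 q.1 * B p.2 q.2)
      (Matrix.of fun p q => (1 : Matrix (Fin 2) (Fin 2) ℂ) p.1 q.1 * C p.2 q.2)
      1 1 B C (fun _ _ _ _ => rfl) (fun _ _ _ _ => rfl) b c v w
    rw [one_mul] at h
    exact h.symm

lemma csiIota_apply {n : ℕ} (B : Matrix (Fin n → Fin 2) (Fin n → Fin 2) ℂ) (b c : Fin 2)
    (v w : Fin n → Fin 2) :
    csiIota n B (b, v) (c, w) = (1 : Matrix (Fin 2) (Fin 2) ℂ) b c * B v w := rfl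

lemma csi_extract {n : ℕ} (A : Matrix (Fin 2 × (Fin n → Fin 2)) (Fin 2 × (Fin n → Fin 2)) ℂ)
    (hA : IsPauliProd A) :
    ∃ (ω : ℂ) (Q : Matrix (Fin 2) (Fin 2) ℂ) (P : Fin n → Matrix (Fin 2) (Fin 2) ℂ),
      ω ∈ ({1, -1, Complex.I, -Complex.I} : Set ℂ) ∧
      Q ∈ ({1, pauliX, pauliY, pauliZ} : Set (Matrix (Fin 2) (Fin 2) ℂ)) ∧
      (∀ j, P j ∈ ({1, pauliX, pauliY, pauliZ} : Set (Matrix (Fin 2) (Fin 2) ℂ))) ∧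
      (∀ b c v w, A (b, v) (c, w)
        = ω * Q b c * (Matrix.of fun v w : Fin n → Fin 2 => ∏ j, P j (v j) (w j)) v w) ∧
      ((Matrix.of fun v w : Fin n → Fin 2 => ∏ j, P j (v j) (w j)) *
        (Matrix.of fun v w : Fin n → Fin 2 => ∏ j, P j (v j) (w j)) = 1) ∧
      ∃ v w, (Matrix.of fun v w : Fin n → Fin 2 => ∏ j, P j (v j) (w j)) v w ≠ 0 := by
  obtain ⟨ω, Q, P, hω, hQ, hP, hform⟩ := hA
  have hTT := csi_T_sq P (fun j => csi_pauli_sq _ (hP j))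
  refine ⟨ω, Q, P, hω, hQ, hP, fun b c v w => hform (b, v) (c, w), hTT, ?_⟩
  have h1 : ((Matrix.of fun v w : Fin n → Fin 2 => ∏ j, P j (v j) (w j)) *
      (Matrix.of fun v w : Fin n → Fin 2 => ∏ j, P j (v j) (w j))) (fun _ => 0) (fun _ => 0)
      = 1 := by rw [hTT]; simp [Matrix.one_apply]
  rw [Matrix.mul_apply] at h1
  have hne : (∑ u, (Matrix.of fun v w : Fin n → Fin 2 => ∏ j, P j (v j) (w j)) (fun _ => 0) u *
      (Matrix.of fun v w : Fin n → Fin 2 => ∏ j, P j (v j) (w j)) u (fun _ => 0)) ≠ 0 := by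
    rw [h1]; exact one_ne_zero
  obtain ⟨u, _, hu⟩ := Finset.exists_ne_zero_of_sum_ne_zero hne
  exact ⟨_, u, left_ne_zero_of_mul hu⟩

end csiAux
theorem contracted_stabilizers_independent {n k : ℕ} (hn : 1 ≤ n)
    (gz gx : Matrix (Fin 2 × (Fin n → Fin 2)) (Fin 2 × (Fin n → Fin 2)) ℂ)
    (g : Fin k → Matrix (Fin 2 × (Fin n → Fin 2)) (Fin 2 × (Fin n → Fin 2)) ℂ)
    (a : Fin 2)
    (f : Fin (k + 2) → Matrix (Fin 2 × (Fin n → Fin 2)) (Fin 2 × (Fin n → Fin 2)) ℂ)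
    (hf : f = Fin.cons gz (Fin.cons gx g))
    (hPauli : ∀ i, IsPauliProd (f i))
    (hcomm : ∀ i j, f i * f j = f j * f i)
    (hind : ∀ i, f i ∉
      Submonoid.closure (Set.range fun j : {j : Fin (k + 2) // j ≠ i} => f j.val))
    (hz : ∃ h' : Matrix (Fin n → Fin 2) (Fin n → Fin 2) ℂ, ∀ b c v w, gz (b, v) (c, w) = pauliZ b c * h' v w)
    (hx : ∃ h' : Matrix (Fin n → Fin 2) (Fin n → Fin 2) ℂ, ∀ b c v w, gx (b, v) (c, w) = pauliX b c * h' v w)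
    (hgI : ∀ i, ∃ h' : Matrix (Fin n → Fin 2) (Fin n → Fin 2) ℂ, ∀ b c v w,
      g i (b, v) (c, w) = (if b = c then (1 : ℂ) else 0) * h' v w)
    (ctr : Matrix (Fin 2 × (Fin n → Fin 2)) (Fin 2 × (Fin n → Fin 2)) ℂ →
      Matrix (Fin n → Fin 2) (Fin n → Fin 2) ℂ)
    (hctr : ∀ A v w, ctr A v w = A (a, v) (a, w))
    (h : Fin (k + 1) → Matrix (Fin n → Fin 2) (Fin n → Fin 2) ℂ)
    (hh : h = Fin.cons (ctr gz) (fun i => ctr (g i))) :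
    (∀ i, IsPauli (h i)) ∧ (∀ i j, h i * h j = h j * h i) ∧
      (∀ i, h i ∉
        Submonoid.closure (Set.range fun j : {j : Fin (k + 1) // j ≠ i} => h j.val)) := by
  classical
  obtain ⟨hz', hzs⟩ := hz
  obtain ⟨hx', hxs⟩ := hx
  choose hg' hgs using hgI
  -- index bookkeeping
  have f0 : f 0 = gz := by rw [hf]; exact Fin.cons_zero _ _
  have one_eq : (1 : Fin (k + 2)) = Fin.succ 0 := by ext; simp
  have f1 : f 1 = gx := by rw [hf, one_eq, Fin.cons_succ, Fin.cons_zero]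
  have fsucc : ∀ m : Fin k, f m.succ.succ = g m := by
    intro m; rw [hf, Fin.cons_succ, Fin.cons_succ]
  have h0e : h 0 = ctr gz := by rw [hh]; exact Fin.cons_zero _ _
  have hse : ∀ m : Fin k, h m.succ = ctr (g m) := by intro m; rw [hh, Fin.cons_succ]
  -- contraction values
  have ctrg : ∀ m, ctr (g m) = hg' m := by
    intro m; ext v w; rw [hctr, hgs]; simp
  have ctrgz : ctr gz = pauliZ a a • hz' := by
    ext v w; rw [hctr, hzs]; simp
  have h0mat : h 0 = pauliZ a a • hz' := by rw [h0e, ctrgz]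
  have hZaa : pauliZ a a = 1 ∨ pauliZ a a = -1 := by
    fin_cases a
    · left; simp [pauliZ]
    · right; simp [pauliZ]
  have hZaa2 : pauliZ a a * pauliZ a a = 1 := by rcases hZaa with e | e <;> rw [e] <;> norm_num
  have hZaane : pauliZ a a ≠ 0 := by rcases hZaa with e | e <;> rw [e] <;> norm_num
  have gform : ∀ m, ∀ b c v w,
      g m (b, v) (c, w) = (1 : Matrix (Fin 2) (Fin 2) ℂ) b c * hg' m v w := by
    intro m b c v w; rw [hgs, Matrix.one_apply]
  -- extraction for gz
  obtain ⟨ωz, Qz, Pz, hωz, hQz, hPz, zform, zTT, vz, wz, zTnz⟩ := csi_extract gz (f0 ▸ hPauli 0)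
  set Tz : Matrix (Fin n → Fin 2) (Fin n → Fin 2) ℂ :=
    Matrix.of fun v w : Fin n → Fin 2 => ∏ j, Pz j (v j) (w j) with hTzdef
  have zrec : ∀ b c v w, pauliZ b c * hz' v w = ωz * Qz b c * Tz v w := by
    intro b c v w; rw [← hzs, zform]
  have Qz01 : Qz 0 1 = 0 := by
    have e := zrec 0 1 vz wz
    rw [show pauliZ 0 1 = 0 by simp [pauliZ], zero_mul] at e
    rcases mul_eq_zero.mp e.symm with e' | e'
    · rcases mul_eq_zero.mp e' with e'' | e''
      · exact absurd e'' (csi_phase_ne_zero hωz)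
      · exact e''
    · exact absurd e' zTnz
  have QzD : Qz = 1 ∨ Qz = pauliZ := csi_Q_diag hQz Qz01
  have Qz00 : Qz 0 0 = 1 := by
    rcases QzD with rfl | rfl
    · simp [Matrix.one_apply]
    · simp [pauliZ]
  have hz'eq : hz' = ωz • Tz := by
    ext v w
    have e := zrec 0 0 v w
    rw [show pauliZ 0 0 = 1 by simp [pauliZ], one_mul, Qz00, mul_one] at e
    simpa using e
  have hz'sq : hz' * hz' = (ωz * ωz) • 1 := by
    rw [hz'eq, Matrix.smul_mul, Matrix.mul_smul, zTT, smul_smul]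
  -- extraction for gx
  obtain ⟨ωx, Qx, Px, hωx, hQx, hPx, xform, xTT, vx, wx, xTnz⟩ := csi_extract gx (f1 ▸ hPauli 1)
  set Tx : Matrix (Fin n → Fin 2) (Fin n → Fin 2) ℂ :=
    Matrix.of fun v w : Fin n → Fin 2 => ∏ j, Px j (v j) (w j) with hTxdef
  have xrec : ∀ b c v w, pauliX b c * hx' v w = ωx * Qx b c * Tx v w := by
    intro b c v w; rw [← hxs, xform]
  have Qx00 : Qx 0 0 = 0 := by
    have e := xrec 0 0 vx wx
    rw [show pauliX 0 0 = 0 by simp [pauliX], zero_mul] at e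
    rcases mul_eq_zero.mp e.symm with e' | e'
    · rcases mul_eq_zero.mp e' with e'' | e''
      · exact absurd e'' (csi_phase_ne_zero hωx)
      · exact e''
    · exact absurd e' xTnz
  have QxD : Qx = pauliX ∨ Qx = pauliY := csi_Q_off hQx Qx00
  have cxne : ωx * Qx 0 1 ≠ 0 := by
    have hQx01 : Qx 0 1 = 1 ∨ Qx 0 1 = -Complex.I := by
      rcases QxD with rfl | rfl
      · left; simp [pauliX]
      · right; simp [pauliY]
    refine mul_ne_zero (csi_phase_ne_zero hωx) ?_
    rcases hQx01 with e | e <;> rw [e] <;> simp [Complex.I_ne_zero]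
  have hx'eq : hx' = (ωx * Qx 0 1) • Tx := by
    ext v w
    have e := xrec 0 1 v w
    rw [show pauliX 0 1 = 1 by simp [pauliX], one_mul] at e
    simpa [mul_assoc] using e
  have hx'sq : hx' * hx' = (ωx * Qx 0 1 * (ωx * Qx 0 1)) • 1 := by
    rw [hx'eq, Matrix.smul_mul, Matrix.mul_smul, xTT, smul_smul]
  -- extraction for each g m
  have gkey : ∀ m, ∃ (ω : ℂ) (P : Fin n → Matrix (Fin 2) (Fin 2) ℂ),
      ω ∈ ({1, -1, Complex.I, -Complex.I} : Set ℂ) ∧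
      (∀ j, P j ∈ ({1, pauliX, pauliY, pauliZ} : Set (Matrix (Fin 2) (Fin 2) ℂ))) ∧
      hg' m = ω • (Matrix.of fun v w : Fin n → Fin 2 => ∏ j, P j (v j) (w j)) ∧
      ((Matrix.of fun v w : Fin n → Fin 2 => ∏ j, P j (v j) (w j)) *
        (Matrix.of fun v w : Fin n → Fin 2 => ∏ j, P j (v j) (w j)) = 1) ∧
      ∃ v w, (Matrix.of fun v w : Fin n → Fin 2 => ∏ j, P j (v j) (w j)) v w ≠ 0 := by
    intro m
    obtain ⟨ω, Q, P, hω, hQ, hP, form, TT, v₁, w₁, Tnz⟩ :=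
      csi_extract (g m) ((fsucc m) ▸ hPauli m.succ.succ)
    have grec : ∀ b c v w, (1 : Matrix (Fin 2) (Fin 2) ℂ) b c * hg' m v w
        = ω * Q b c * (Matrix.of fun v w : Fin n → Fin 2 => ∏ j, P j (v j) (w j)) v w := by
      intro b c v w; rw [← gform m, form]
    have Q01 : Q 0 1 = 0 := by
      have e := grec 0 1 v₁ w₁
      rw [Matrix.one_apply_ne (by decide : (0 : Fin 2) ≠ 1), zero_mul] at e
      rcases mul_eq_zero.mp e.symm with e' | e'
      · rcases mul_eq_zero.mp e' with e'' | e''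
        · exact absurd e'' (csi_phase_ne_zero hω)
        · exact e''
      · exact absurd e' Tnz
    have Q00 : Q 0 0 = 1 := by
      rcases csi_Q_diag hQ Q01 with rfl | rfl
      · simp [Matrix.one_apply]
      · simp [pauliZ]
    refine ⟨ω, P, hω, hP, ?_, TT, v₁, w₁, Tnz⟩
    ext v w
    have e := grec 0 0 v w
    rw [Matrix.one_apply_eq, one_mul, Q00, mul_one] at e
    simpa using e
  choose ωg Pg hωg hPg hgeq hgTT vg wg hgTnz using gkey
  have hgne : ∀ m, hg' m ≠ 0 := by
    intro m hcon
    rw [hgeq m] at hcon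
    rcases smul_eq_zero.mp hcon with e | e
    · exact csi_phase_ne_zero (hωg m) e
    · exact hgTnz m (by rw [e]; rfl)
  -- commutation relations among the small factors
  have mzx := csi_tmul gz gx pauliZ pauliX hz' hx' hzs hxs
  have mxz := csi_tmul gx gz pauliX pauliZ hx' hz' hxs hzs
  have Ezx : gz * gx = gx * gz := by rw [← f0, ← f1]; exact hcomm 0 1
  have anti : hz' * hx' = -(hx' * hz') := by
    ext v w
    have e1 := mzx 0 1 v w
    rw [Ezx, mxz 0 1 v w] at e1
    rw [show (pauliX * pauliZ) 0 1 = -1 by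
        simp [Matrix.mul_apply, Fin.sum_univ_two, pauliX, pauliZ],
      show (pauliZ * pauliX) 0 1 = 1 by
        simp [Matrix.mul_apply, Fin.sum_univ_two, pauliX, pauliZ], one_mul] at e1
    rw [Matrix.neg_apply, ← e1]; ring
  have czg : ∀ m, hz' * hg' m = hg' m * hz' := by
    intro m
    have E : gz * g m = g m * gz := by rw [← f0, ← fsucc m]; exact hcomm 0 m.succ.succ
    have m1 := csi_tmul gz (g m) pauliZ 1 hz' (hg' m) hzs (gform m)
    have m2 := csi_tmul (g m) gz 1 pauliZ (hg' m) hz' (gform m) hzs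
    ext v w
    have e1 := m1 0 0 v w
    rw [E, m2 0 0 v w] at e1
    rw [show ((1 : Matrix (Fin 2) (Fin 2) ℂ) * pauliZ) 0 0 = 1 by
        simp [Matrix.mul_apply, Fin.sum_univ_two, pauliZ, Matrix.one_apply],
      show ((pauliZ * (1 : Matrix (Fin 2) (Fin 2) ℂ))) 0 0 = 1 by
        simp [Matrix.mul_apply, Fin.sum_univ_two, pauliZ, Matrix.one_apply],
      one_mul, one_mul] at e1
    exact e1.symm
  have cxg : ∀ m, hx' * hg' m = hg' m * hx' := by
    intro m
    have E : gx * g m = g m * gx := by rw [← f1, ← fsucc m]; exact hcomm 1 m.succ.succ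
    have m1 := csi_tmul gx (g m) pauliX 1 hx' (hg' m) hxs (gform m)
    have m2 := csi_tmul (g m) gx 1 pauliX (hg' m) hx' (gform m) hxs
    ext v w
    have e1 := m1 0 1 v w
    rw [E, m2 0 1 v w] at e1
    rw [show ((1 : Matrix (Fin 2) (Fin 2) ℂ) * pauliX) 0 1 = 1 by
        simp [Matrix.mul_apply, Fin.sum_univ_two, pauliX, Matrix.one_apply],
      show ((pauliX * (1 : Matrix (Fin 2) (Fin 2) ℂ))) 0 1 = 1 by
        simp [Matrix.mul_apply, Fin.sum_univ_two, pauliX, Matrix.one_apply],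
      one_mul, one_mul] at e1
    exact e1.symm
  have cgg : ∀ m m', hg' m * hg' m' = hg' m' * hg' m := by
    intro m m'
    have E : g m * g m' = g m' * g m := by
      rw [← fsucc m, ← fsucc m']; exact hcomm m.succ.succ m'.succ.succ
    have m1 := csi_tmul (g m) (g m') 1 1 (hg' m) (hg' m') (gform m) (gform m')
    have m2 := csi_tmul (g m') (g m) 1 1 (hg' m') (hg' m) (gform m') (gform m)
    ext v w
    have e1 := m1 0 0 v w
    rw [E, m2 0 0 v w] at e1
    rw [show ((1 : Matrix (Fin 2) (Fin 2) ℂ) * (1 : Matrix (Fin 2) (Fin 2) ℂ)) 0 0 = 1 by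
        simp [Matrix.mul_apply, Fin.sum_univ_two, Matrix.one_apply], one_mul, one_mul] at e1
    exact e1.symm
  -- iota facts
  have gmap : ∀ m, csiIota n (hg' m) = g m := by
    intro m; ext ⟨b, v⟩ ⟨c, w⟩
    rw [csiIota_apply, gform m]
  have iotazz : csiIota n (hz' * hz') = gz * gz := by
    ext ⟨b, v⟩ ⟨c, w⟩
    rw [csiIota_apply, csi_tmul gz gz pauliZ pauliZ hz' hz' hzs hzs b c v w,
      csi_pauli_sq pauliZ (by simp)]
  have h00 : h 0 * h 0 = hz' * hz' := by
    rw [h0mat, Matrix.smul_mul, Matrix.mul_smul, smul_smul, hZaa2, one_smul]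
  have Ezx0 : h 0 * hx' = -(hx' * h 0) := by
    rw [h0mat, Matrix.smul_mul, anti, smul_neg, ← Matrix.mul_smul]
  refine ⟨?_, ?_, ?_⟩
  · -- IsPauli
    intro i
    refine Fin.cases ?_ ?_ i
    · have Qzaa : Qz a a = 1 ∨ Qz a a = -1 := by
        rcases QzD with rfl | rfl
        · left; simp [Matrix.one_apply]
        · exact hZaa
      refine ⟨ωz * Qz a a, Pz, csi_phase_mul_sign hωz Qzaa, hPz, ?_⟩
      intro v w
      rw [h0e, hctr, zform a a v w, mul_assoc, mul_assoc]
      rfl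
    · intro m
      refine ⟨ωg m, Pg m, hωg m, hPg m, ?_⟩
      intro v w
      rw [hse m, ctrg m, hgeq m]
      simp
  · -- commuting
    have base : ∀ m : Fin k, h 0 * h m.succ = h m.succ * h 0 := by
      intro m
      rw [h0mat, hse m, ctrg m, Matrix.smul_mul, Matrix.mul_smul, czg m]
    intro i j
    refine Fin.cases ?_ ?_ i
    · refine Fin.cases rfl (fun m => base m) j
    · intro m
      refine Fin.cases (base m).symm (fun m' => ?_) j
      rw [hse m, hse m', ctrg m, ctrg m', cgg m m']
  · -- independence
    intro i
    refine Fin.cases ?_ ?_ i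
    · intro hmem
      have hcent : Submonoid.closure (Set.range fun j : {j : Fin (k + 1) // j ≠ 0} => h j.val) ≤
          Submonoid.centralizer {hx'} := by
        rw [Submonoid.closure_le]
        rintro y ⟨⟨j, hj⟩, rfl⟩
        obtain ⟨m, rfl⟩ := Fin.eq_succ_of_ne_zero hj
        rw [SetLike.mem_coe, Submonoid.mem_centralizer_iff]
        rintro z hz2
        rw [Set.mem_singleton_iff] at hz2
        subst hz2
        simp only
        rw [hse m, ctrg m]
        exact cxg m
      have hc := hcent hmem
      rw [Submonoid.mem_centralizer_iff] at hc
      have hc' : hx' * h 0 = h 0 * hx' := hc hx' rfl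
      have Eneg : hx' * h 0 = -(hx' * h 0) := hc'.trans Ezx0
      have E2 : hx' * h 0 = 0 := by
        have h2 : (2 : ℂ) • (hx' * h 0) = 0 := by
          rw [two_smul]; nth_rewrite 2 [Eneg]; simp
        simpa using (smul_eq_zero.mp h2).resolve_left (by norm_num)
      have E3 : h 0 = 0 := by
        have e : (hx' * hx') * h 0 = 0 := by rw [Matrix.mul_assoc, E2, Matrix.mul_zero]
        rw [hx'sq, Matrix.smul_mul, Matrix.one_mul] at e
        exact (smul_eq_zero.mp e).resolve_left (mul_ne_zero cxne cxne)
      rw [h0mat, hz'eq, smul_smul] at E3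
      have eT : Tz = 0 :=
        (smul_eq_zero.mp E3).resolve_left (mul_ne_zero hZaane (csi_phase_ne_zero hωz))
      exact zTnz (by rw [eT]; rfl)
    · intro m hmem
      obtain ⟨l, hl, hlp⟩ := Submonoid.exists_list_of_mem_closure hmem
      have hl' : ∀ y ∈ l, y = h 0 ∨ ∃ m', m' ≠ m ∧ y = hg' m' := by
        intro y hy
        obtain ⟨⟨j, hj⟩, rfl⟩ := hl y hy
        rcases Fin.eq_zero_or_eq_succ j with rfl | ⟨m', rfl⟩
        · exact Or.inl rfl
        · exact Or.inr ⟨m', fun e => hj (by rw [e]), by simp only; rw [hse m', ctrg m']⟩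
      set Sg : Set (Matrix (Fin n → Fin 2) (Fin n → Fin 2) ℂ) :=
        {A | ∃ m', m' ≠ m ∧ A = hg' m'} with hSgdef
      have cent : ∀ R ∈ Submonoid.closure Sg, (hx' * R = R * hx') ∧ (h 0 * R = R * h 0) := by
        intro R hR
        have hle : Submonoid.closure Sg ≤ Submonoid.centralizer {hx', h 0} := by
          rw [Submonoid.closure_le]
          rintro y ⟨m', hm', rfl⟩
          rw [SetLike.mem_coe, Submonoid.mem_centralizer_iff]
          rintro z hz2
          rcases hz2 with rfl | rfl
          · exact cxg m'
          · rw [h0mat, Matrix.smul_mul, Matrix.mul_smul, czg m']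
        have hcc := hle hR
        rw [Submonoid.mem_centralizer_iff] at hcc
        exact ⟨hcc hx' (Or.inl rfl), hcc (h 0) (Or.inr rfl)⟩
      have main : ∀ L : List (Matrix (Fin n → Fin 2) (Fin n → Fin 2) ℂ),
          (∀ y ∈ L, y = h 0 ∨ ∃ m', m' ≠ m ∧ y = hg' m') →
          ∃ t : ℕ, ∃ R ∈ Submonoid.closure Sg, L.prod = h 0 ^ t * R := by
        intro L
        induction L with
        | nil => exact fun _ => ⟨0, 1, one_mem _, by simp⟩
        | cons y L ih =>
          intro hyL
          obtain ⟨t, R, hR, hpr⟩ := ih fun z hz2 => hyL z (List.mem_cons_of_mem _ hz2)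
          rcases hyL y List.mem_cons_self with rfl | ⟨m', hm', rfl⟩
          · exact ⟨t + 1, R, hR, by rw [List.prod_cons, hpr, ← mul_assoc, ← pow_succ']⟩
          · refine ⟨t, hg' m' * R, mul_mem (Submonoid.subset_closure ⟨m', hm', rfl⟩) hR, ?_⟩
            have hcm : Commute (hg' m') (h 0) := by
              unfold Commute SemiconjBy
              rw [h0mat, Matrix.smul_mul, Matrix.mul_smul, czg m']
            rw [List.prod_cons, hpr, ← mul_assoc, (hcm.pow_right t).eq, mul_assoc]
      obtain ⟨t, R, hR, hpr⟩ := main l hl'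
      rw [hlp, hse m, ctrg m] at hpr
      -- hpr : hg' m = h 0 ^ t * R
      rcases Nat.even_or_odd t with ⟨s, hs⟩ | ⟨s, hs⟩
      · -- even case
        apply hind m.succ.succ
        have hpow : h 0 ^ t = (h 0 * h 0) ^ s := by rw [hs, ← two_mul, pow_mul, pow_two]
        have hgm : g m = (gz * gz) ^ s * csiIota n R := by
          rw [← gmap m, hpr, hpow, map_mul, map_pow, h00, iotazz]
        rw [fsucc m, hgm]
        have hgzmem : gz ∈ Submonoid.closure
            (Set.range fun j : {j : Fin (k + 2) // j ≠ m.succ.succ} => f j.val) :=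
          Submonoid.subset_closure ⟨⟨0, (Fin.succ_ne_zero _).symm⟩, f0⟩
        have hiR : csiIota n R ∈ Submonoid.closure
            (Set.range fun j : {j : Fin (k + 2) // j ≠ m.succ.succ} => f j.val) := by
          have hmem' : csiIota n R ∈ Submonoid.map (csiIota n) (Submonoid.closure Sg) :=
            ⟨R, hR, rfl⟩
          rw [MonoidHom.map_mclosure] at hmem'
          refine Submonoid.closure_le.mpr ?_ hmem'
          rintro y ⟨A, ⟨m', hm', rfl⟩, rfl⟩
          refine Submonoid.subset_closure
            ⟨⟨m'.succ.succ, fun e => hm' (Fin.succ_injective _ (Fin.succ_injective _ e))⟩, ?_⟩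
          simp only
          rw [fsucc m', gmap m']
        exact mul_mem (pow_mem (mul_mem hgzmem hgzmem) s) hiR
      · -- odd case
        have hRx : hx' * R = R * hx' := (cent R hR).1
        have hsm : h 0 ^ (2 * s) = ((ωz * ωz) ^ s) • (1 : Matrix (Fin n → Fin 2) (Fin n → Fin 2) ℂ) := by
          rw [pow_mul, pow_two, h00, hz'sq, smul_pow, one_pow]
        have e2 : hg' m * hx' = -(hx' * hg' m) := by
          rw [hs] at hpr
          calc hg' m * hx' = (h 0 ^ (2 * s) * (h 0 * R)) * hx' := by
                rw [hpr, pow_succ]; simp only [mul_assoc]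
            _ = ((ωz * ωz) ^ s) • (h 0 * (R * hx')) := by
                rw [hsm, Matrix.smul_mul, Matrix.one_mul, Matrix.smul_mul]
                simp [mul_assoc]
            _ = ((ωz * ωz) ^ s) • ((h 0 * hx') * R) := by rw [← hRx, ← mul_assoc]
            _ = ((ωz * ωz) ^ s) • (-(hx' * h 0) * R) := by rw [Ezx0]
            _ = -(hx' * (((ωz * ωz) ^ s) • (h 0 * R))) := by
                rw [Matrix.neg_mul, smul_neg, Matrix.mul_smul, mul_assoc]
            _ = -(hx' * hg' m) := by
                rw [hpr, pow_succ, mul_assoc, hsm, Matrix.smul_mul, Matrix.one_mul]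
        have Eneg : hx' * hg' m = -(hx' * hg' m) := (cxg m).symm ▸ e2
        have E2 : hx' * hg' m = 0 := by
          have h2 : (2 : ℂ) • (hx' * hg' m) = 0 := by
            rw [two_smul]; nth_rewrite 2 [Eneg]; simp
          simpa using (smul_eq_zero.mp h2).resolve_left (by norm_num)
        have E3 : hg' m = 0 := by
          have e : (hx' * hx') * hg' m = 0 := by rw [Matrix.mul_assoc, E2, Matrix.mul_zero]
          rw [hx'sq, Matrix.smul_mul, Matrix.one_mul] at e
          exact (smul_eq_zero.mp e).resolve_left (mul_ne_zero cxne cxne)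
        exact hgne m E3
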